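/- arXiv:2111.06436 — 2 statements merged into one kernel-verified Lean document; each statement's English description precedes it below -/
import Mathlib

section
/- Let N ≥ 2, 1 ≤ k ≤ N−1, p ∈ (1/2,1), q = 1−p, λ = p/q, ϱ = (√p − √q)². For ζ ∈ Ξ_{N,k} and 1 ≤ i ≤ N−1 define V(ζ,i) = λ^{−ζ(i)/2}, with V(ζ,0) = λ^{0} = 1 and V(ζ,N) = λ^{−(N−2k)/2}. Then the asymmetric corner-flip generator satisfies, for every ζ ∈ Ξ_{N,k} and 1 ≤ i ≤ N−1, the discrete Cole–Hopf identity 𝔏^{(p)}_{N,k} V(·,i)(ζ) = √(pq)·( V(ζ,i+1) + V(ζ,i−1) − 2V(ζ,i) ) − ϱ·V(ζ,i). -/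
/-- `ζ` is a height path in `Ξ_{N,k}`: `ζ(0) = 0`, `ζ(N) = N - 2k` and `±1` steps. -/
def HeightPath (N k : ℕ) (ζ : ℕ → ℤ) : Prop :=
  ζ 0 = 0 ∧ ζ N = (N : ℤ) - 2 * k ∧
    ∀ i < N, ζ (i + 1) - ζ i = 1 ∨ ζ (i + 1) - ζ i = -1

/-- The upward corner flip at `j`: the pointwise maximum of `ζ` and `ζ^{(j)}`. -/
def cornerFlipPlus (j : ℕ) (ζ : ℕ → ℤ) : ℕ → ℤ :=
  fun n => if n = j then max (ζ j) (ζ (j - 1) + ζ (j + 1) - ζ j) else ζ n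

/-- The downward corner flip at `j`: the pointwise minimum of `ζ` and `ζ^{(j)}`. -/
def cornerFlipMinus (j : ℕ) (ζ : ℕ → ℤ) : ℕ → ℤ :=
  fun n => if n = j then min (ζ j) (ζ (j - 1) + ζ (j + 1) - ζ j) else ζ n

/-- The exponential observable `V(ζ,i) = λ^{-ζ(i)/2}` with `λ = p/q`. -/
noncomputable def expV (p : ℝ) (ζ : ℕ → ℤ) (i : ℕ) : ℝ :=
  (p / (1 - p)) ^ (-((ζ i : ℝ)) / 2)

/-- The discrete Cole–Hopf identity: the asymmetric corner-flip generator applied to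
`V(·,i)` equals `√(pq) Δ_D V(ζ,·)(i) - ϱ V(ζ,i)` with `ϱ = (√p - √q)²`. -/
theorem corner_flip_cole_hopf
    (N k : ℕ) (hN : 2 ≤ N) (hk1 : 1 ≤ k) (hk2 : k ≤ N - 1)
    (p : ℝ) (hp : 1 / 2 < p) (hp1 : p < 1)
    (ζ : ℕ → ℤ) (hζ : HeightPath N k ζ)
    (i : ℕ) (hi1 : 1 ≤ i) (hi2 : i ≤ N - 1) :
    (∑ j ∈ Finset.Icc 1 (N - 1),
        (p * (expV p (cornerFlipPlus j ζ) i - expV p ζ i) +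
          (1 - p) * (expV p (cornerFlipMinus j ζ) i - expV p ζ i))) =
      Real.sqrt (p * (1 - p)) *
          (expV p ζ (i + 1) + expV p ζ (i - 1) - 2 * expV p ζ i) -
        (Real.sqrt p - Real.sqrt (1 - p)) ^ 2 * expV p ζ i := by
  have hp0 : (0:ℝ) < p := by linarith
  have hq0 : (0:ℝ) < 1 - p := by linarith
  have ha : (0:ℝ) < p / (1 - p) := div_pos hp0 hq0
  obtain ⟨h0, hNv, hstep⟩ := hζ
  have hi1' : i - 1 + 1 = i := by omega
  have h1 := hstep (i - 1) (by omega)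
  rw [hi1'] at h1
  have h2 := hstep i (by omega)
  have hmem : i ∈ Finset.Icc 1 (N - 1) := Finset.mem_Icc.mpr ⟨hi1, hi2⟩
  rw [Finset.sum_eq_single_of_mem i hmem (by
    intro j hj hji
    simp [expV, cornerFlipPlus, cornerFlipMinus, (Ne.symm hji : i ≠ j)])]
  set sp := Real.sqrt p with hsp_def
  set sq := Real.sqrt (1 - p) with hsq_def
  have hsp0 : 0 < sp := Real.sqrt_pos.mpr hp0
  have hsq0 : 0 < sq := Real.sqrt_pos.mpr hq0
  have hsp2 : sp ^ 2 = p := Real.sq_sqrt hp0.le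
  have hsq2 : sq ^ 2 = 1 - p := Real.sq_sqrt hq0.le
  have hpq : Real.sqrt (p * (1 - p)) = sp * sq := Real.sqrt_mul hp0.le _
  have hroot : (p / (1 - p)) ^ ((1:ℝ)/2) = sp / sq := by
    rw [← Real.sqrt_eq_rpow, Real.sqrt_div hp0.le]
  have hrootn : (p / (1 - p)) ^ (-(1:ℝ)/2) = sq / sp := by
    rw [show (-(1:ℝ)/2) = -((1:ℝ)/2) by ring, Real.rpow_neg ha.le, hroot, inv_div]
  have E1 : (p/(1-p)) ^ (-((ζ i : ℝ) + 1)/2)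
      = (p/(1-p)) ^ (-((ζ i : ℝ))/2) * (sq/sp) := by
    rw [show -((ζ i : ℝ) + 1)/2 = -((ζ i : ℝ))/2 + (-(1:ℝ)/2) by ring,
      Real.rpow_add ha, hrootn]
  have E2 : (p/(1-p)) ^ (-((ζ i : ℝ) - 1)/2)
      = (p/(1-p)) ^ (-((ζ i : ℝ))/2) * (sp/sq) := by
    rw [show -((ζ i : ℝ) - 1)/2 = -((ζ i : ℝ))/2 + ((1:ℝ)/2) by ring,
      Real.rpow_add ha, hroot]
  have E3 : (p/(1-p)) ^ (-((ζ i : ℝ) + 2)/2)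
      = (p/(1-p)) ^ (-((ζ i : ℝ))/2) * ((1-p)/p) := by
    rw [show -((ζ i : ℝ) + 2)/2 = -((ζ i : ℝ))/2 + (-1:ℝ) by ring,
      Real.rpow_add ha, Real.rpow_neg_one, inv_div]
  have E4 : (p/(1-p)) ^ (-((ζ i : ℝ) - 2)/2)
      = (p/(1-p)) ^ (-((ζ i : ℝ))/2) * (p/(1-p)) := by
    rw [show -((ζ i : ℝ) - 2)/2 = -((ζ i : ℝ))/2 + (1:ℝ) by ring,
      Real.rpow_add ha, Real.rpow_one]
  rcases h1 with h1 | h1 <;> rcases h2 with h2 | h2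
  · -- ascending slope
    have e1 : ζ (i - 1) = ζ i - 1 := by omega
    have e2 : ζ (i + 1) = ζ i + 1 := by omega
    have hplus : cornerFlipPlus i ζ i = ζ i := by
      have h : cornerFlipPlus i ζ i = max (ζ i) (ζ (i - 1) + ζ (i + 1) - ζ i) := if_pos rfl
      rw [h]; omega
    have hminus : cornerFlipMinus i ζ i = ζ i := by
      have h : cornerFlipMinus i ζ i = min (ζ i) (ζ (i - 1) + ζ (i + 1) - ζ i) := if_pos rfl
      rw [h]; omega
    simp only [expV, hplus, hminus, e1, e2, hpq]
    push_cast
    rw [E1, E2, ← hsq2, ← hsp2]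
    field_simp
    ring
  · -- local maximum
    have e1 : ζ (i - 1) = ζ i - 1 := by omega
    have e2 : ζ (i + 1) = ζ i - 1 := by omega
    have hplus : cornerFlipPlus i ζ i = ζ i := by
      have h : cornerFlipPlus i ζ i = max (ζ i) (ζ (i - 1) + ζ (i + 1) - ζ i) := if_pos rfl
      rw [h]; omega
    have hminus : cornerFlipMinus i ζ i = ζ i - 2 := by
      have h : cornerFlipMinus i ζ i = min (ζ i) (ζ (i - 1) + ζ (i + 1) - ζ i) := if_pos rfl
      rw [h]; omega
    simp only [expV, hplus, hminus, e1, e2, hpq]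
    push_cast
    rw [E2, E4, ← hsq2, ← hsp2]
    field_simp
    ring
  · -- local minimum
    have e1 : ζ (i - 1) = ζ i + 1 := by omega
    have e2 : ζ (i + 1) = ζ i + 1 := by omega
    have hplus : cornerFlipPlus i ζ i = ζ i + 2 := by
      have h : cornerFlipPlus i ζ i = max (ζ i) (ζ (i - 1) + ζ (i + 1) - ζ i) := if_pos rfl
      rw [h]; omega
    have hminus : cornerFlipMinus i ζ i = ζ i := by
      have h : cornerFlipMinus i ζ i = min (ζ i) (ζ (i - 1) + ζ (i + 1) - ζ i) := if_pos rfl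
      rw [h]; omega
    simp only [expV, hplus, hminus, e1, e2, hpq]
    push_cast
    rw [E1, E3, ← hsq2, ← hsp2]
    field_simp
    ring
  · -- descending slope
    have e1 : ζ (i - 1) = ζ i + 1 := by omega
    have e2 : ζ (i + 1) = ζ i - 1 := by omega
    have hplus : cornerFlipPlus i ζ i = ζ i := by
      have h : cornerFlipPlus i ζ i = max (ζ i) (ζ (i - 1) + ζ (i + 1) - ζ i) := if_pos rfl
      rw [h]; omega
    have hminus : cornerFlipMinus i ζ i = ζ i := by
      have h : cornerFlipMinus i ζ i = min (ζ i) (ζ (i - 1) + ζ (i + 1) - ζ i) := if_pos rfl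
      rw [h]; omega
    simp only [expV, hplus, hminus, e1, e2, hpq]
    push_cast
    rw [E1, E2, ← hsq2, ← hsp2]
    field_simp
    ring
end

section
/- Let N ≥ 2, let 𝔛_N = {x ∈ ℝ^{N−1} : 0 ≤ x_1 ≤ … ≤ x_{N−1} ≤ N}, and let π_N be the uniform probability measure on 𝔛_N (normalized (N−1)-dimensional Lebesgue measure, with density (N−1)!/N^{N−1}). Then for all bounded measurable f, g : 𝔛_N → ℝ: (a) ∫_{𝔛_N} L_N f(x) dπ_N(x) = 0, i.e. π_N is stationary for L_N; and (b) ∫_{𝔛_N} f(x)·L_N g(x) dπ_N(x) = ∫_{𝔛_N} g(x)·L_N f(x) dπ_N(x), i.e. L_N is self-adjoint in L²(π_N). -/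
open MeasureTheory

noncomputable section

/-- The simplex `𝔛_N = {0 ≤ x_1 ≤ … ≤ x_{N-1} ≤ N}` inside `ℝ^{N-1}`. -/
def simplexSet (N : ℕ) : Set (Fin (N - 1) → ℝ) :=
  {x | (∀ i, 0 ≤ x i ∧ x i ≤ N) ∧ ∀ i j : Fin (N - 1), i ≤ j → x i ≤ x j}

/-- The right neighbour `x_{i+1}` of the `i`-th coordinate, with the convention
`x_N = N`. -/
def upperNbr (N : ℕ) (x : Fin (N - 1) → ℝ) (i : Fin (N - 1)) : ℝ :=
  if h : i.val + 1 < N - 1 then x ⟨i.val + 1, h⟩ else N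

/-- The left neighbour `x_{i-1}` of the `i`-th coordinate, with the convention
`x_0 = 0`. -/
def lowerNbr (N : ℕ) (x : Fin (N - 1) → ℝ) (i : Fin (N - 1)) : ℝ :=
  if 0 < i.val then x ⟨i.val - 1, by have := i.isLt; omega⟩ else 0

/-- The generator of the random walk on the simplex: each coordinate is re-sampled at
rate one, uniformly in the interval delimited by its neighbours. -/
def simplexGen (N : ℕ) (f : (Fin (N - 1) → ℝ) → ℝ) (x : Fin (N - 1) → ℝ) : ℝ :=
  ∑ i : Fin (N - 1),
    ∫ u in (0 : ℝ)..1,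
      (f (Function.update x i (u * upperNbr N x i + (1 - u) * lowerNbr N x i)) - f x)

/-- The uniform probability measure on the simplex `𝔛_N`: normalized Lebesgue measure,
with density `(N-1)!/N^{N-1}`. -/
def simplexMeasure (N : ℕ) : Measure (Fin (N - 1) → ℝ) :=
  (ENNReal.ofReal ((Nat.factorial (N - 1) : ℝ) / (N : ℝ) ^ (N - 1))) •
    (volume.restrict (simplexSet N))

namespace SimplexAux

/-- Insert a coordinate. -/
def ins {n : ℕ} (i : Fin (n + 1)) (t : ℝ) (y : Fin n → ℝ) : Fin (n + 1) → ℝ :=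
  Fin.insertNth (α := fun _ => ℝ) i t y

lemma ins_apply_same {n : ℕ} (i : Fin (n + 1)) (t : ℝ) (y : Fin n → ℝ) : ins i t y i = t := by
  simp [ins]

lemma update_ins {n : ℕ} (i : Fin (n + 1)) (t s : ℝ) (y : Fin n → ℝ) :
    Function.update (ins i t y) i s = ins i s y := by
  funext j
  rcases eq_or_ne j i with rfl | hj
  · simp [ins]
  · obtain ⟨k, rfl⟩ := Fin.exists_succAbove_eq hj
    rw [Function.update_of_ne (Fin.succAbove_ne i k)]
    simp [ins]

lemma integrable_of_bounded {α : Type*} [MeasurableSpace α] {μ : Measure α}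
    (hμ : μ Set.univ ≠ ⊤) {φ : α → ℝ} (hφ : Measurable φ) (C : ℝ) (hb : ∀ x, |φ x| ≤ C) :
    Integrable φ μ :=
  Integrable.mono' (g := fun _ => C) (integrable_const_iff.2 (Or.inr ⟨hμ.lt_top⟩))
    hφ.aestronglyMeasurable (Filter.Eventually.of_forall fun x => by
      simpa [Real.norm_eq_abs] using hb x)

lemma measurable_param_integral {m : ℕ} {ψ : (Fin m → ℝ) × ℝ → ℝ} (hψ : Measurable ψ) :
    Measurable fun x => ∫ u in (0:ℝ)..1, ψ (x, u) := by
  have h : (fun x => ∫ u in (0:ℝ)..1, ψ (x, u)) = fun x => ∫ u in Set.Ioc (0:ℝ) 1, ψ (x, u) :=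
    funext fun x => intervalIntegral.integral_of_le zero_le_one
  rw [h]
  exact (hψ.stronglyMeasurable.integral_prod_right').measurable

lemma measurable_updPair {m : ℕ} (i : Fin m) {A B : (Fin m → ℝ) → ℝ}
    (hA : Measurable A) (hB : Measurable B) {g : (Fin m → ℝ) → ℝ} (hg : Measurable g) :
    Measurable fun p : (Fin m → ℝ) × ℝ =>
      g (Function.update p.1 i (p.2 * B p.1 + (1 - p.2) * A p.1)) := by
  apply hg.comp
  exact measurable_update'.comp (measurable_fst.prodMk
    ((measurable_snd.mul (hB.comp measurable_fst)).add
      ((measurable_const.sub measurable_snd).mul (hA.comp measurable_fst))))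

lemma abs_intervalIntegral_le {g : ℝ → ℝ} (C : ℝ) (hb : ∀ u, |g u| ≤ C) :
    |∫ u in (0:ℝ)..1, g u| ≤ C := by
  have := intervalIntegral.norm_integral_le_of_norm_le_const
    (C := C) (f := g) (a := (0:ℝ)) (b := 1) (fun u _ => by simpa [Real.norm_eq_abs] using hb u)
  simpa [Real.norm_eq_abs] using this

lemma Ksym (m : ℕ) (i : Fin m)
    (A B : (Fin m → ℝ) → ℝ) (hA : Measurable A) (hB : Measurable B)
    (hAu : ∀ x t, A (Function.update x i t) = A x)
    (hBu : ∀ x t, B (Function.update x i t) = B x)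
    (R' : Set (Fin m → ℝ)) (hR' : MeasurableSet R')
    (hR'u : ∀ x t, Function.update x i t ∈ R' ↔ x ∈ R')
    (S : Set (Fin m → ℝ))
    (hchar : ∀ x, x ∈ S ↔ (x ∈ R' ∧ A x ≤ x i ∧ x i ≤ B x))
    (hSfin : volume S ≠ ⊤)
    (f g : (Fin m → ℝ) → ℝ) (hf : Measurable f) (hg : Measurable g)
    (Cf Cg : ℝ) (hfb : ∀ x, |f x| ≤ Cf) (hgb : ∀ x, |g x| ≤ Cg) :
    (∫ x in S, f x * ∫ u in (0:ℝ)..1,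
        g (Function.update x i (u * B x + (1 - u) * A x)))
      = ∫ x in S, g x * ∫ u in (0:ℝ)..1,
          f (Function.update x i (u * B x + (1 - u) * A x)) := by
  classical
  obtain ⟨n, rfl⟩ : ∃ n, m = n + 1 := ⟨m - 1, by have := i.pos; omega⟩
  have hSmeas : MeasurableSet S := by
    have hSeq : S = R' ∩ ({x | A x ≤ x i} ∩ {x | x i ≤ B x}) := by
      ext x; simpa [Set.mem_inter_iff, and_assoc] using hchar x
    rw [hSeq]
    exact hR'.inter ((measurableSet_le hA (measurable_pi_apply i)).inter
      (measurableSet_le (measurable_pi_apply i) hB))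
  have key : ∀ (f g : (Fin (n+1) → ℝ) → ℝ), Measurable f → Measurable g →
      ∀ Cf Cg : ℝ, (∀ x, |f x| ≤ Cf) → (∀ x, |g x| ≤ Cg) →
      (∫ x in S, f x * ∫ u in (0:ℝ)..1,
          g (Function.update x i (u * B x + (1 - u) * A x)))
        = ∫ y : Fin n → ℝ,
            (if ins i 0 y ∈ R' ∧ A (ins i 0 y) ≤ B (ins i 0 y) then
              (B (ins i 0 y) - A (ins i 0 y))⁻¹ *
              ((∫ s in A (ins i 0 y)..B (ins i 0 y), f (ins i s y)) *
               (∫ s in A (ins i 0 y)..B (ins i 0 y), g (ins i s y)))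
            else 0) := by
    intro f g hf hg Cf Cg hfb hgb
    have hCg0 : 0 ≤ Cg := le_trans (abs_nonneg _) (hgb fun _ => 0)
    have hCf0 : 0 ≤ Cf := le_trans (abs_nonneg _) (hfb fun _ => 0)
    set e : (Fin (n+1) → ℝ) ≃ᵐ ℝ × (Fin n → ℝ) :=
      MeasurableEquiv.piFinSuccAbove (fun _ => ℝ) i with he
    have hem : MeasurePreserving e :=
      volume_preserving_piFinSuccAbove (fun _ : Fin (n+1) => ℝ) i
    have hesymm : ∀ (t : ℝ) (y : Fin n → ℝ), e.symm (t, y) = ins i t y := fun t y => by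
      simp [he, ins, MeasurableEquiv.piFinSuccAbove_symm_apply, Fin.insertNthEquiv]
    set G : (Fin (n+1) → ℝ) → ℝ :=
      fun x => ∫ u in (0:ℝ)..1, g (Function.update x i (u * B x + (1 - u) * A x)) with hG
    have hGmeas : Measurable G := by
      rw [hG]; exact measurable_param_integral (measurable_updPair i hA hB hg)
    have hGb : ∀ x, |G x| ≤ Cg := fun x => abs_intervalIntegral_le Cg fun u => hgb _
    set φ : (Fin (n+1) → ℝ) → ℝ := fun x => f x * G x with hφdef
    have hφmeas : Measurable φ := hf.mul hGmeas
    have hφb : ∀ x, |φ x| ≤ Cf * Cg := fun x => by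
      rw [hφdef, abs_mul]
      exact mul_le_mul (hfb x) (hGb x) (abs_nonneg _) hCf0
    have hint : IntegrableOn φ S volume := by
      refine integrable_of_bounded ?_ hφmeas (Cf * Cg) hφb
      rwa [Measure.restrict_apply_univ]
    have hH : Integrable (S.indicator φ) volume := (integrable_indicator_iff hSmeas).2 hint
    have hprev : MeasurePreserving e.symm := hem.symm e
    have hcomp : Integrable (fun p : ℝ × (Fin n → ℝ) => S.indicator φ (e.symm p))
        ((volume : Measure ℝ).prod (volume : Measure (Fin n → ℝ))) := by
      have h2 := (hprev.integrable_comp_emb (MeasurableEquiv.measurableEmbedding _)).2 hH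
      rw [Measure.volume_eq_prod] at h2
      exact h2
    calc (∫ x in S, φ x) = ∫ x, S.indicator φ x := (integral_indicator hSmeas).symm
      _ = ∫ p : ℝ × (Fin n → ℝ), S.indicator φ (e.symm p) := by
          rw [hprev.integral_comp (MeasurableEquiv.measurableEmbedding _) (S.indicator φ)]
      _ = ∫ y : Fin n → ℝ, ∫ t : ℝ, S.indicator φ (e.symm (t, y)) := by
          rw [Measure.volume_eq_prod, integral_prod_symm _ hcomp]
      _ = _ := by
          refine integral_congr_ae (Filter.Eventually.of_forall fun y => ?_)
          beta_reduce
          set a := A (ins i 0 y) with ha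
          set b := B (ins i 0 y) with hb
          have hAz : ∀ t, A (ins i t y) = a := fun t => by
            rw [ha, ← update_ins i t 0 y, hAu]
          have hBz : ∀ t, B (ins i t y) = b := fun t => by
            rw [hb, ← update_ins i t 0 y, hBu]
          have hRz : ∀ t, (ins i t y ∈ R') ↔ (ins i 0 y ∈ R') := fun t => by
            rw [← update_ins i t 0 y, hR'u]
          have hmem : ∀ t, ins i t y ∈ S ↔ (ins i 0 y ∈ R' ∧ a ≤ t ∧ t ≤ b) := fun t => by
            rw [hchar, hRz, hAz, hBz, ins_apply_same]
          simp only [hesymm]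
          by_cases hy : ins i 0 y ∈ R'
          · -- main case
            set Jg : ℝ := ∫ u in (0:ℝ)..1, g (ins i (u * b + (1 - u) * a) y) with hJg
            have hind : ∀ t, S.indicator φ (ins i t y)
                = (Set.Icc a b).indicator (fun t => f (ins i t y) * Jg) t := by
              intro t
              by_cases ht : a ≤ t ∧ t ≤ b
              · rw [Set.indicator_of_mem ((hmem t).2 ⟨hy, ht.1, ht.2⟩),
                  Set.indicator_of_mem (Set.mem_Icc.2 ht)]
                have : G (ins i t y) = Jg := by
                  rw [hG, hJg]
                  refine intervalIntegral.integral_congr fun u _ => ?_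
                  rw [hAz, hBz, update_ins]
                show f (ins i t y) * G (ins i t y) = f (ins i t y) * Jg
                rw [this]
              · rw [Set.indicator_of_notMem (fun hm => ht ⟨((hmem t).1 hm).2.1, ((hmem t).1 hm).2.2⟩),
                  Set.indicator_of_notMem (by simpa [Set.mem_Icc] using ht)]
            rw [integral_congr_ae (Filter.Eventually.of_forall hind),
              integral_indicator measurableSet_Icc]
            rw [integral_mul_const]
            rcases lt_trichotomy a b with hab | hab | hab
            · rw [if_pos ⟨hy, hab.le⟩]
              have h1 : (∫ t in Set.Icc a b, f (ins i t y)) = ∫ s in a..b, f (ins i s y) := by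
                rw [integral_Icc_eq_integral_Ioc, intervalIntegral.integral_of_le hab.le]
              have h2 : Jg = (b - a)⁻¹ * ∫ s in a..b, g (ins i s y) := by
                rw [hJg]
                have : ∀ u : ℝ, u * b + (1 - u) * a = (b - a) * u + a := fun u => by ring
                simp_rw [this]
                rw [intervalIntegral.integral_comp_mul_add (fun s => g (ins i s y))
                  (sub_ne_zero.2 hab.ne') a]
                norm_num [smul_eq_mul]
              rw [h1, h2]; ring
            · rw [if_pos ⟨hy, hab.le⟩, hab, integral_Icc_eq_integral_Ioc]
              simp
            · rw [if_neg (fun h => absurd h.2 (not_le.2 hab))]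
              rw [Set.Icc_eq_empty (not_le.2 hab)]
              simp
          · -- y not in R'
            have hz : ∀ t, S.indicator φ (ins i t y) = 0 := fun t =>
              Set.indicator_of_notMem (fun hm => hy ((hmem t).1 hm).1) _
            rw [if_neg (fun h => hy h.1)]
            simp only [hz, integral_zero]
  rw [key f g hf hg Cf Cg hfb hgb, key g f hg hf Cg Cf hgb hfb]
  refine integral_congr_ae (Filter.Eventually.of_forall fun y => ?_)
  beta_reduce
  by_cases h : ins i 0 y ∈ R' ∧ A (ins i 0 y) ≤ B (ins i 0 y)
  · rw [if_pos h, if_pos h]; ring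
  · rw [if_neg h, if_neg h]


lemma measurable_lowerNbr (N : ℕ) (i : Fin (N-1)) : Measurable fun x => lowerNbr N x i := by
  unfold lowerNbr
  by_cases h : 0 < i.val
  · simp only [if_pos h]; exact measurable_pi_apply _
  · simp only [if_neg h]; exact measurable_const

lemma measurable_upperNbr (N : ℕ) (i : Fin (N-1)) : Measurable fun x => upperNbr N x i := by
  unfold upperNbr
  by_cases h : i.val + 1 < N - 1
  · simp only [dif_pos h]; exact measurable_pi_apply _
  · simp only [dif_neg h]; exact measurable_const

lemma lowerNbr_update (N : ℕ) (i : Fin (N-1)) (x : Fin (N-1) → ℝ) (t : ℝ) :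
    lowerNbr N (Function.update x i t) i = lowerNbr N x i := by
  unfold lowerNbr
  split_ifs with h
  · rw [Function.update_of_ne (Fin.ne_of_val_ne (by simp; omega))]
  · rfl

lemma upperNbr_update (N : ℕ) (i : Fin (N-1)) (x : Fin (N-1) → ℝ) (t : ℝ) :
    upperNbr N (Function.update x i t) i = upperNbr N x i := by
  unfold upperNbr
  split_ifs with h
  · rw [Function.update_of_ne (Fin.ne_of_val_ne (by simp))]
  · rfl

lemma measurableSet_simplexSet (N : ℕ) : MeasurableSet (simplexSet N) := by
  have heq : simplexSet N = (⋂ i, {x : Fin (N-1) → ℝ | 0 ≤ x i ∧ x i ≤ N}) ∩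
      ⋂ i, ⋂ j, ⋂ (_ : i ≤ j), {x : Fin (N-1) → ℝ | x i ≤ x j} := by
    ext x; simp [simplexSet, Set.mem_iInter]
  rw [heq]
  refine (MeasurableSet.iInter fun i => ?_).inter
    (MeasurableSet.iInter fun i => MeasurableSet.iInter fun j => MeasurableSet.iInter fun _ =>
      measurableSet_le (measurable_pi_apply i) (measurable_pi_apply j))
  exact (measurableSet_le measurable_const (measurable_pi_apply i)).inter
    (measurableSet_le (measurable_pi_apply i) measurable_const)

lemma volume_simplexSet_ne_top (N : ℕ) : volume (simplexSet N) ≠ ⊤ := by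
  have hsub : simplexSet N ⊆ Set.univ.pi fun _ : Fin (N-1) => Set.Icc (0:ℝ) N :=
    fun x hx j _ => hx.1 j
  refine ne_top_of_le_ne_top ?_ (measure_mono hsub)
  rw [volume_pi_pi]
  refine (ENNReal.prod_lt_top fun i _ => ?_).ne
  simp [Real.volume_Icc]

lemma simplex_char (N : ℕ) (i : Fin (N-1)) (x : Fin (N-1) → ℝ) :
    x ∈ simplexSet N ↔
      ((Function.update x i (lowerNbr N x i) ∈ simplexSet N ∧
        Function.update x i (upperNbr N x i) ∈ simplexSet N) ∧
       lowerNbr N x i ≤ x i ∧ x i ≤ upperNbr N x i) := by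
  constructor
  · rintro ⟨hbd, hmono⟩
    have hAx : lowerNbr N x i ≤ x i := by
      unfold lowerNbr
      split_ifs with h
      · exact hmono _ _ (by simp only [Fin.le_def]; omega)
      · exact (hbd i).1
    have hBx : x i ≤ upperNbr N x i := by
      unfold upperNbr
      split_ifs with h
      · exact hmono _ _ (by simp only [Fin.le_def]; omega)
      · exact (hbd i).2
    have hA0 : 0 ≤ lowerNbr N x i := by
      unfold lowerNbr
      split_ifs with h
      · exact (hbd _).1
      · exact le_refl 0
    have hBN : upperNbr N x i ≤ N := by
      unfold upperNbr
      split_ifs with h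
      · exact (hbd _).2
      · exact le_refl _
    have hAN : lowerNbr N x i ≤ N := hAx.trans (hbd i).2
    have hB0 : (0:ℝ) ≤ upperNbr N x i := (hbd i).1.trans hBx
    refine ⟨⟨⟨fun j => ?_, fun j k hjk => ?_⟩, ⟨fun j => ?_, fun j k hjk => ?_⟩⟩, hAx, hBx⟩
    · rcases eq_or_ne j i with hj | hj
      on_goal 1 => subst hj
      · rw [Function.update_self]; exact ⟨hA0, hAN⟩
      · rw [Function.update_of_ne hj]; exact hbd j
    · rcases eq_or_ne j i with hj | hj
      on_goal 1 => subst hj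
      · rcases eq_or_ne k j with hk | hk
        on_goal 1 => subst hk
        · exact le_refl _
        · rw [Function.update_self, Function.update_of_ne hk]
          exact hAx.trans (hmono _ _ hjk)
      · rcases eq_or_ne k i with hk | hk
        on_goal 1 => subst hk
        · rw [Function.update_of_ne hj, Function.update_self]
          have hji : j.val < k.val :=
            lt_of_le_of_ne (Fin.le_def.1 hjk) fun hc => hj (Fin.ext hc)
          unfold lowerNbr
          rw [if_pos (by omega)]
          exact hmono _ _ (by simp only [Fin.le_def]; omega)
        · rw [Function.update_of_ne hj, Function.update_of_ne hk]
          exact hmono _ _ hjk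
    · rcases eq_or_ne j i with hj | hj
      on_goal 1 => subst hj
      · rw [Function.update_self]; exact ⟨hB0, hBN⟩
      · rw [Function.update_of_ne hj]; exact hbd j
    · rcases eq_or_ne j i with hj | hj
      on_goal 1 => subst hj
      · rcases eq_or_ne k j with hk | hk
        on_goal 1 => subst hk
        · exact le_refl _
        · rw [Function.update_self, Function.update_of_ne hk]
          have hik : j.val < k.val :=
            lt_of_le_of_ne (Fin.le_def.1 hjk) fun hc => hk (Fin.ext hc.symm)
          unfold upperNbr
          rw [dif_pos (by have := k.isLt; omega)]
          exact hmono _ _ (by simp only [Fin.le_def]; omega)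
      · rcases eq_or_ne k i with hk | hk
        on_goal 1 => subst hk
        · rw [Function.update_of_ne hj, Function.update_self]
          exact (hmono _ _ hjk).trans hBx
        · rw [Function.update_of_ne hj, Function.update_of_ne hk]
          exact hmono _ _ hjk
  · rintro ⟨⟨hA, hB⟩, hAx, hBx⟩
    constructor
    · intro j
      rcases eq_or_ne j i with hj | hj
      on_goal 1 => subst hj
      · have h1 := hA.1 j
        have h2 := hB.1 j
        rw [Function.update_self] at h1 h2
        exact ⟨h1.1.trans hAx, hBx.trans h2.2⟩
      · have h1 := hA.1 j
        rwa [Function.update_of_ne hj] at h1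
    · intro j k hjk
      rcases eq_or_ne j i with hj | hj
      on_goal 1 => subst hj
      · rcases eq_or_ne k j with hk | hk
        on_goal 1 => subst hk
        · exact le_refl _
        · have h1 := hB.2 j k hjk
          rw [Function.update_self, Function.update_of_ne hk] at h1
          exact hBx.trans h1
      · rcases eq_or_ne k i with hk | hk
        on_goal 1 => subst hk
        · have h1 := hA.2 j k hjk
          rw [Function.update_of_ne hj, Function.update_self] at h1
          exact h1.trans hAx
        · have h1 := hA.2 j k hjk
          rwa [Function.update_of_ne hj, Function.update_of_ne hk] at h1


lemma adj (N : ℕ) (f g : (Fin (N-1) → ℝ) → ℝ) (hfm : Measurable f) (hgm : Measurable g)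
    (Cf Cg : ℝ) (hfb : ∀ x, |f x| ≤ Cf) (hgb : ∀ x, |g x| ≤ Cg) :
    ∫ x in simplexSet N, f x * simplexGen N g x =
      ∫ x in simplexSet N, g x * simplexGen N f x := by
  classical
  have hmeas := measurableSet_simplexSet N
  have hfin := volume_simplexSet_ne_top N
  have hfinμ : (volume.restrict (simplexSet N)) Set.univ ≠ ⊤ := by
    rw [Measure.restrict_apply_univ]; exact hfin
  have hIoc : (volume.restrict (Set.uIoc (0:ℝ) 1)) Set.univ ≠ ⊤ := by
    rw [Measure.restrict_apply_univ, Set.uIoc_of_le zero_le_one, Real.volume_Ioc]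
    exact ENNReal.ofReal_ne_top
  have expand : ∀ (f g : (Fin (N-1) → ℝ) → ℝ), Measurable f → Measurable g →
      ∀ Cf Cg : ℝ, (∀ x, |f x| ≤ Cf) → (∀ x, |g x| ≤ Cg) →
      ∫ x in simplexSet N, f x * simplexGen N g x =
      ∑ i : Fin (N-1),
        ((∫ x in simplexSet N, f x * ∫ u in (0:ℝ)..1,
            g (Function.update x i (u * upperNbr N x i + (1-u) * lowerNbr N x i)))
          - ∫ x in simplexSet N, f x * g x) := by
    intro f g hfm hgm Cf Cg hfb hgb
    have hCf0 : 0 ≤ Cf := le_trans (abs_nonneg _) (hfb fun _ => 0)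
    have hpair : ∀ i : Fin (N-1), Measurable fun p : (Fin (N-1) → ℝ) × ℝ =>
        g (Function.update p.1 i (p.2 * upperNbr N p.1 i + (1 - p.2) * lowerNbr N p.1 i)) :=
      fun i => measurable_updPair i (measurable_lowerNbr N i) (measurable_upperNbr N i) hgm
    have hKmeas : ∀ i : Fin (N-1), Measurable fun x => ∫ u in (0:ℝ)..1,
        g (Function.update x i (u * upperNbr N x i + (1-u) * lowerNbr N x i)) :=
      fun i => measurable_param_integral (hpair i)
    have hKb : ∀ (i : Fin (N-1)) (x : Fin (N-1) → ℝ), |∫ u in (0:ℝ)..1,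
        g (Function.update x i (u * upperNbr N x i + (1-u) * lowerNbr N x i))| ≤ Cg :=
      fun i x => abs_intervalIntegral_le Cg fun u => hgb _
    have hII : ∀ (i : Fin (N-1)) (x : Fin (N-1) → ℝ), IntervalIntegrable
        (fun u => g (Function.update x i (u * upperNbr N x i + (1-u) * lowerNbr N x i)))
        volume 0 1 := by
      intro i x
      rw [intervalIntegrable_iff]
      exact integrable_of_bounded hIoc
        ((hpair i).comp (measurable_const.prodMk measurable_id)) Cg (fun u => hgb _)
    have hsplit : ∀ (i : Fin (N-1)) (x : Fin (N-1) → ℝ),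
        (∫ u in (0:ℝ)..1,
          (g (Function.update x i (u * upperNbr N x i + (1-u) * lowerNbr N x i)) - g x))
          = (∫ u in (0:ℝ)..1,
              g (Function.update x i (u * upperNbr N x i + (1-u) * lowerNbr N x i))) - g x := by
      intro i x
      rw [intervalIntegral.integral_sub (hII i x) intervalIntegrable_const,
        intervalIntegral.integral_const]
      norm_num
    have hgen : ∀ x, f x * simplexGen N g x
        = ∑ i : Fin (N-1), (f x * (∫ u in (0:ℝ)..1,
            g (Function.update x i (u * upperNbr N x i + (1-u) * lowerNbr N x i))) - f x * g x) := by
      intro x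
      rw [simplexGen, Finset.mul_sum]
      refine Finset.sum_congr rfl fun i _ => ?_
      rw [hsplit i x, mul_sub]
    have hint1 : ∀ i : Fin (N-1), Integrable (fun x => f x * ∫ u in (0:ℝ)..1,
        g (Function.update x i (u * upperNbr N x i + (1-u) * lowerNbr N x i)))
        (volume.restrict (simplexSet N)) := fun i =>
      integrable_of_bounded hfinμ (hfm.mul (hKmeas i)) (Cf * Cg)
        fun x => by rw [abs_mul]; exact mul_le_mul (hfb x) (hKb i x) (abs_nonneg _) hCf0
    have hint2 : Integrable (fun x => f x * g x) (volume.restrict (simplexSet N)) :=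
      integrable_of_bounded hfinμ (hfm.mul hgm) (Cf * Cg)
        fun x => by rw [abs_mul]; exact mul_le_mul (hfb x) (hgb x) (abs_nonneg _) hCf0
    calc ∫ x in simplexSet N, f x * simplexGen N g x
        = ∫ x in simplexSet N, ∑ i : Fin (N-1), (f x * (∫ u in (0:ℝ)..1,
            g (Function.update x i (u * upperNbr N x i + (1-u) * lowerNbr N x i))) - f x * g x) :=
          integral_congr_ae (Filter.Eventually.of_forall hgen)
      _ = ∑ i : Fin (N-1), ∫ x in simplexSet N, (f x * (∫ u in (0:ℝ)..1,
            g (Function.update x i (u * upperNbr N x i + (1-u) * lowerNbr N x i))) - f x * g x) :=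
          integral_finset_sum _ (fun i _ => (hint1 i).sub hint2)
      _ = _ := Finset.sum_congr rfl fun i _ => integral_sub (hint1 i) hint2
  rw [expand f g hfm hgm Cf Cg hfb hgb, expand g f hgm hfm Cg Cf hgb hfb]
  refine Finset.sum_congr rfl fun i _ => ?_
  have hfg : ∫ x in simplexSet N, f x * g x = ∫ x in simplexSet N, g x * f x :=
    integral_congr_ae (Filter.Eventually.of_forall fun x => mul_comm _ _)
  rw [hfg]
  congr 1
  have hR'u : ∀ (x : Fin (N-1) → ℝ) (t : ℝ),
      Function.update x i t ∈ {x : Fin (N-1) → ℝ |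
        Function.update x i (lowerNbr N x i) ∈ simplexSet N ∧
        Function.update x i (upperNbr N x i) ∈ simplexSet N} ↔
      x ∈ {x : Fin (N-1) → ℝ |
        Function.update x i (lowerNbr N x i) ∈ simplexSet N ∧
        Function.update x i (upperNbr N x i) ∈ simplexSet N} := by
    intro x t
    simp only [Set.mem_setOf_eq, lowerNbr_update, upperNbr_update, Function.update_idem]
  have hR'meas : MeasurableSet {x : Fin (N-1) → ℝ |
      Function.update x i (lowerNbr N x i) ∈ simplexSet N ∧
      Function.update x i (upperNbr N x i) ∈ simplexSet N} := by
    have h1 : Measurable fun x : Fin (N-1) → ℝ => Function.update x i (lowerNbr N x i) :=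
      measurable_update'.comp (measurable_id.prodMk (measurable_lowerNbr N i))
    have h2 : Measurable fun x : Fin (N-1) → ℝ => Function.update x i (upperNbr N x i) :=
      measurable_update'.comp (measurable_id.prodMk (measurable_upperNbr N i))
    exact (h1 (measurableSet_simplexSet N)).inter (h2 (measurableSet_simplexSet N))
  exact Ksym (N-1) i (fun x => lowerNbr N x i) (fun x => upperNbr N x i)
    (measurable_lowerNbr N i) (measurable_upperNbr N i)
    (fun x t => lowerNbr_update N i x t) (fun x t => upperNbr_update N i x t)
    _ hR'meas hR'u (simplexSet N) (fun x => simplex_char N i x) hfin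
    f g hfm hgm Cf Cg hfb hgb

end SimplexAux

/-- The uniform measure on the simplex is stationary for the random walk on the simplex,
and the generator is self-adjoint in `L²(π_N)`: for bounded measurable `f, g`,
`∫ L_N f dπ_N = 0` and `∫ f · L_N g dπ_N = ∫ g · L_N f dπ_N`. -/
theorem simplex_walk_stationary_selfadjoint
    (N : ℕ) (hN : 2 ≤ N)
    (f g : (Fin (N - 1) → ℝ) → ℝ)
    (hfm : Measurable f) (hgm : Measurable g)
    (hfb : ∃ C : ℝ, ∀ x, |f x| ≤ C) (hgb : ∃ C : ℝ, ∀ x, |g x| ≤ C) :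
    (∫ x, simplexGen N f x ∂(simplexMeasure N)) = 0 ∧
      (∫ x, f x * simplexGen N g x ∂(simplexMeasure N)) =
        ∫ x, g x * simplexGen N f x ∂(simplexMeasure N) := by
  obtain ⟨Cf, hfb⟩ := hfb
  obtain ⟨Cg, hgb⟩ := hgb
  constructor
  · unfold simplexMeasure
    rw [integral_smul_measure]
    have h0 : ∫ x in simplexSet N, simplexGen N f x = 0 := by
      have h := SimplexAux.adj N (fun _ => (1:ℝ)) f measurable_const hfm 1 Cf
        (fun _ => by norm_num) hfb
      have hL1 : ∀ x, simplexGen N (fun _ : Fin (N-1) → ℝ => (1:ℝ)) x = 0 := fun x => by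
        simp [simplexGen]
      calc ∫ x in simplexSet N, simplexGen N f x
          = ∫ x in simplexSet N, (1:ℝ) * simplexGen N f x := by simp
        _ = ∫ x in simplexSet N, f x * simplexGen N (fun _ => (1:ℝ)) x := h
        _ = 0 := by simp [hL1]
    rw [h0, smul_zero]
  · unfold simplexMeasure
    rw [integral_smul_measure, integral_smul_measure]
    rw [SimplexAux.adj N f g hfm hgm Cf Cg hfb hgb]

end
end
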